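/- Norm correspondence in the stable sector (Lemma C.1). Let λ and μ be partitions and let m be an integer with m ≥ |λ| + |μ|. With Λ* = (λ + δ^m) ∪ μ, Λ⊛ = (λ + δ^{m+1}) ∪ μ, h↓_Λ(q,t) = ∏_{s ∈ BΛ} (1 − q^{a_{Λ⊛}(s)} t^{l_{Λ*}(s)+1}), and h↑_Λ(q,t) = h↓_{Λ'}(t,q), where Λ' is the conjugate superpartition given by (Λ')* = (μ' + δ^m) ∪ λ' and (Λ')⊛ = (μ' + δ^{m+1}) ∪ λ', the following identity holds in the field ℚ(q,t): q^{|λ|} · h↑_Λ(q,t)/h↓_Λ(q,t) = q^{|λ|} · b_λ(q,qt)^{−1} · b_μ(qt,t)^{−1}, where b_ν(q,t) = ∏_{s ∈ ν} (1 − q^{a_ν(s)} t^{l_ν(s)+1})/(1 − q^{a_ν(s)+1} t^{l_ν(s)}). -/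

import Mathlib

noncomputable section

namespace DoubleMacdonald

/-- A partition, encoded as a weakly decreasing function `ℕ → ℕ` (0-indexed: `f 0 = λ₁`)
with finitely many nonzero values. -/
def IsPartition (f : ℕ → ℕ) : Prop :=
  (∀ ⦃i j : ℕ⦄, i ≤ j → f j ≤ f i) ∧ ∃ N, ∀ i, N ≤ i → f i = 0

/-- The size `|λ| = Σᵢ λᵢ` of a partition. -/
def psize (f : ℕ → ℕ) : ℕ := ∑ᶠ i, f i

/-- The number `ℓ(λ)` of nonzero parts of a partition. -/
def plen (f : ℕ → ℕ) : ℕ := Nat.card {i : ℕ | 1 ≤ f i}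

/-- The conjugate partition: `λ'ⱼ = #{i : λᵢ ≥ j}` (0-indexed: `conj f j = λ'_{j+1}`). -/
def conj (f : ℕ → ℕ) : ℕ → ℕ := fun j => Nat.card {i : ℕ | j + 1 ≤ f i}

/-- The staircase partition `δ^m = (m-1, m-2, …, 1, 0)`. -/
def delta (m : ℕ) : ℕ → ℕ := fun i => m - 1 - i

/-- Componentwise sum of partitions. -/
def addF (f g : ℕ → ℕ) : ℕ → ℕ := fun i => f i + g i

/-- Union `λ ∪ μ` of partitions: the weakly decreasing rearrangement of the combined
multiset of parts, defined via `(λ ∪ μ)' = λ' + μ'`. -/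
def unionF (f g : ℕ → ℕ) : ℕ → ℕ := conj (addF (conj f) (conj g))

/-- Partial sum `λ₁ + ⋯ + λ_k`. -/
def psum (f : ℕ → ℕ) (k : ℕ) : ℕ := ∑ i ∈ Finset.range k, f i

/-- The statistic `n(λ) = Σᵢ (i-1) λᵢ`. -/
def nstat (f : ℕ → ℕ) : ℕ := ∑ᶠ i, i * f i

/-- The (extended) dominance order: `f ⪰ g` iff all partial sums of `f` dominate those of `g`. -/
def Dominates (f g : ℕ → ℕ) : Prop := ∀ k, psum g k ≤ psum f k

/-- The field `ℚ(q,t)` of rational functions in two indeterminates over `ℚ`. -/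
abbrev K : Type := FractionRing (MvPolynomial (Fin 2) ℚ)

/-- The indeterminate `q` of `ℚ(q,t)`. -/
def q : K := algebraMap (MvPolynomial (Fin 2) ℚ) K (MvPolynomial.X 0)

/-- The indeterminate `t` of `ℚ(q,t)`. -/
def t : K := algebraMap (MvPolynomial (Fin 2) ℚ) K (MvPolynomial.X 1)

/-- A cell `(i,j)` (0-indexed) of `Λ*` is bosonic for the pair `(Λ*, Λ⊛)` if it is NOT
the case that both `Λ⊛ᵢ = Λ*ᵢ + 1` and `(Λ⊛)'ⱼ = (Λ*)'ⱼ + 1`. -/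
def Bosonic (L Ls : ℕ → ℕ) (i j : ℕ) : Prop :=
  ¬(Ls i = L i + 1 ∧ conj Ls j = conj L j + 1)

instance (L Ls : ℕ → ℕ) (i j : ℕ) : Decidable (Bosonic L Ls i j) := by
  unfold Bosonic; infer_instance

/-- The hook product `∏_{s ∈ BΛ} (1 − a^{a_{Λ⊛}(s)} b^{l_{Λ*}(s)+1})` over the bosonic
cells of `Λ*`, as an element of `ℚ(q,t)`.  `h↓_Λ(q,t)` is obtained with `(a,b) = (q,t)`,
and `h↑_Λ(q,t) = h↓_{Λ'}(t,q)` with `(a,b) = (t,q)` and the pair `(Λ*, Λ⊛)` conjugated. -/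
def hdownGen (a b : K) (L Ls : ℕ → ℕ) : K :=
  ∏ i ∈ Finset.range (plen L), ∏ j ∈ Finset.range (L i),
    if Bosonic L Ls i j then (1 - a ^ (Ls i - (j + 1)) * b ^ (conj L j - i)) else 1

/-- `b_ν(a,b) = ∏_{s ∈ ν} (1 − a^{arm(s)} b^{leg(s)+1}) / (1 − a^{arm(s)+1} b^{leg(s)})`. -/
def bProd (a b : K) (f : ℕ → ℕ) : K :=
  ∏ i ∈ Finset.range (plen f), ∏ j ∈ Finset.range (f i),
    (1 - a ^ (f i - (j + 1)) * b ^ (conj f j - i)) /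
      (1 - a ^ (f i - j) * b ^ (conj f j - (i + 1)))

/-- Key duality: `i < conj f j ↔ j < f i`. -/
lemma duality {f : ℕ → ℕ} (hf : IsPartition f) (i j : ℕ) :
    i + 1 ≤ conj f j ↔ j + 1 ≤ f i := by
  obtain ⟨hmono, N, hN⟩ := hf
  have hsub : {i : ℕ | j + 1 ≤ f i} ⊆ Set.Iio N := by
    intro x hx
    simp only [Set.mem_setOf_eq] at hx
    simp only [Set.mem_Iio]
    by_contra h
    have := hN x (by omega)
    omega
  have hfin : {i : ℕ | j + 1 ≤ f i}.Finite := (Set.finite_Iio N).subset hsub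
  have hcard : conj f j = ({i : ℕ | j + 1 ≤ f i}).ncard := by
    rw [conj]; exact Nat.card_coe_set_eq _
  constructor
  · intro h
    by_contra hc
    push_neg at hc
    have hsub2 : {i : ℕ | j + 1 ≤ f i} ⊆ Set.Iio i := by
      intro x hx
      simp only [Set.mem_setOf_eq] at hx
      simp only [Set.mem_Iio]
      by_contra h2
      have := hmono (show i ≤ x by omega)
      omega
    have := Set.ncard_le_ncard hsub2 (Set.finite_Iio i)
    have hIio : (Set.Iio i).ncard = i := by
      rw [← Finset.coe_Iio, Set.ncard_coe_finset, Nat.card_Iio]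
    omega
  · intro h
    have hsub2 : Set.Iic i ⊆ {i : ℕ | j + 1 ≤ f i} := by
      intro x hx
      simp only [Set.mem_Iic] at hx
      simp only [Set.mem_setOf_eq]
      exact le_trans h (hmono hx)
    have := Set.ncard_le_ncard hsub2 hfin
    have hIic : (Set.Iic i).ncard = i + 1 := by
      rw [← Finset.coe_Iic, Set.ncard_coe_finset, Nat.card_Iic]
    omega



open Finset

lemma nat_eq_of_lt_iff {a b : ℕ} (h : ∀ v : ℕ, v + 1 ≤ a ↔ v + 1 ≤ b) : a = b := by
  rcases Nat.lt_trichotomy a b with h' | h' | h'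
  · have := (h a).mpr h'; omega
  · exact h'
  · have := (h b).mp h'; omega

lemma conj_isPartition {f : ℕ → ℕ} (hf : IsPartition f) : IsPartition (conj f) := by
  constructor
  · intro j j' hj
    by_contra hc
    push_neg at hc
    obtain ⟨v, hv⟩ : ∃ v, v + 1 = conj f j' := ⟨conj f j' - 1, by omega⟩
    have h1 := (duality hf v j').mp (by omega)
    have h2 := (duality hf v j).mpr (by omega)
    omega
  · refine ⟨f 0, fun j hj => ?_⟩
    by_contra hc
    have h1 := (duality hf 0 j).mp (by omega)
    have := hf.1 (Nat.zero_le 0)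
    omega

lemma conj_conj {f : ℕ → ℕ} (hf : IsPartition f) : ∀ i, conj (conj f) i = f i := by
  intro i
  apply nat_eq_of_lt_iff
  intro v
  rw [duality (conj_isPartition hf) v i, duality hf i v]

/-- Evaluate a conjugate: if `f c ≤ j` and (when `0 < c`) `j + 1 ≤ f (c-1)`, then `conj f j = c`. -/
lemma conj_eq_of {f : ℕ → ℕ} (hf : IsPartition f) {j c : ℕ}
    (h1 : 0 < c → j + 1 ≤ f (c - 1)) (h2 : f c ≤ j) : conj f j = c := by
  apply nat_eq_of_lt_iff
  intro v
  rw [duality hf v j]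
  constructor
  · intro h
    by_contra hc
    have := hf.1 (show c ≤ v by omega)
    omega
  · intro h
    have := h1 (by omega)
    have := hf.1 (show v ≤ c - 1 by omega)
    omega

lemma plen_eq_conj_zero (f : ℕ → ℕ) : plen f = conj f 0 := rfl

lemma part_zero_of_ge {f : ℕ → ℕ} (hf : IsPartition f) {i : ℕ} (h : conj f 0 ≤ i) : f i = 0 := by
  by_contra hc
  have := (duality hf i 0).mpr (by omega)
  omega

lemma part_pos_of_lt {f : ℕ → ℕ} (hf : IsPartition f) {i : ℕ} (h : i < conj f 0) : 1 ≤ f i :=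
  (duality hf i 0).mp (by omega)

lemma psize_eq_sum {f : ℕ → ℕ} {N : ℕ} (hN : ∀ i, N ≤ i → f i = 0) :
    psize f = ∑ i ∈ Finset.range N, f i := by
  rw [psize]
  apply finsum_eq_sum_of_support_subset
  intro x hx
  simp only [Function.mem_support] at hx
  simp only [Finset.coe_range, Set.mem_Iio]
  by_contra h
  exact hx (hN x (by omega))

lemma conj_zero_le_psize {f : ℕ → ℕ} (hf : IsPartition f) : conj f 0 ≤ psize f := by
  obtain ⟨N, hN⟩ := hf.2
  have hN' : ∀ i, max N (conj f 0) ≤ i → f i = 0 := fun i hi => hN i (by omega)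
  rw [psize_eq_sum hN']
  calc conj f 0 = ∑ i ∈ Finset.range (conj f 0), 1 := by simp
    _ ≤ ∑ i ∈ Finset.range (conj f 0), f i := by
        apply Finset.sum_le_sum
        intro i hi
        exact part_pos_of_lt hf (Finset.mem_range.mp hi)
    _ ≤ _ := by
        apply Finset.sum_le_sum_of_subset
        intro x hx
        simp only [Finset.mem_range] at *
        omega

lemma head_le_psize {f : ℕ → ℕ} (hf : IsPartition f) : f 0 ≤ psize f := by
  obtain ⟨N, hN⟩ := hf.2
  have hN' : ∀ i, max N 1 ≤ i → f i = 0 := fun i hi => hN i (by omega)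
  rw [psize_eq_sum hN']
  apply Finset.single_le_sum (f := fun i => f i) (fun _ _ => Nat.zero_le _)
  simp only [Finset.mem_range]; omega


section Main


variable {f g : ℕ → ℕ} {m : ℕ}

/-- `F = f + δ^m` is a partition. -/
lemma isPartition_FD (hf : IsPartition f) (m : ℕ) : IsPartition (addF f (delta m)) := by
  constructor
  · intro i j hij
    have := hf.1 hij
    simp only [addF, delta]
    omega
  · obtain ⟨N, hN⟩ := hf.2
    exact ⟨N + m, fun i hi => by simp only [addF, delta]; have := hN i (by omega); omega⟩

lemma isPartition_addF {a b : ℕ → ℕ} (ha : IsPartition a) (hb : IsPartition b) :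
    IsPartition (addF a b) := by
  constructor
  · intro i j hij
    have := ha.1 hij; have := hb.1 hij
    simp only [addF]; omega
  · obtain ⟨N, hN⟩ := ha.2
    obtain ⟨N', hN'⟩ := hb.2
    exact ⟨N + N', fun i hi => by
      simp only [addF]; have := hN i (by omega); have := hN' i (by omega); omega⟩

section WithHyp
variable (hf : IsPartition f) (hg : IsPartition g) (hm : conj f 0 + g 0 ≤ m)

-- abbreviations used below:
--   F  := addF f (delta m),  Fs := addF f (delta (m+1))
--   cF := conj F, cFs := conj Fs, cg := conj g, p := conj f 0

include hf hm in
/-- E1: for `j + p < m`, `cF j = m - 1 - j`. -/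
lemma cF_small {j : ℕ} (hj : j + conj f 0 < m) : conj (addF f (delta m)) j = m - 1 - j := by
  apply conj_eq_of (isPartition_FD hf m)
  · intro hc
    simp only [addF, delta]
    omega
  · simp only [addF, delta]
    have h0 : f (m - 1 - j) = 0 := part_zero_of_ge hf (by omega)
    omega

include hf hm in
/-- `cF (m - p) = p`. -/
lemma cF_at_M : conj (addF f (delta m)) (m - conj f 0) = conj f 0 := by
  apply conj_eq_of (isPartition_FD hf m)
  · intro hc
    have h1 : 1 ≤ f (conj f 0 - 1) := part_pos_of_lt hf (by omega)
    simp only [addF, delta]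
    omega
  · simp only [addF, delta]
    have h0 : f (conj f 0) = 0 := part_zero_of_ge hf (by omega)
    omega

include hf hm in
lemma cF_le_p {j : ℕ} (hj : m - conj f 0 ≤ j) : conj (addF f (delta m)) j ≤ conj f 0 := by
  have := (conj_isPartition (isPartition_FD hf m)).1 hj
  have := cF_at_M hf hm
  omega

include hf hm in
lemma cF0_le : conj (addF f (delta m)) 0 ≤ m := by
  by_contra hc
  have := (duality (isPartition_FD hf m) m 0).mp (by omega)
  have h0 : f m = 0 := part_zero_of_ge hf (by omega)
  simp only [addF, delta] at this
  omega

include hg hm in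
lemma cg_zero {j : ℕ} (hj : m - conj f 0 ≤ j) : conj g j = 0 := by
  apply conj_eq_of hg (by omega)
  omega

include hf hm in
lemma cFs_zero : conj (addF f (delta (m+1))) 0 = m := by
  apply conj_eq_of (isPartition_FD hf (m+1))
  · intro hc
    simp only [addF, delta]
    omega
  · simp only [addF, delta]
    have h0 : f m = 0 := part_zero_of_ge hf (by omega)
    omega

include hf hm in
lemma cFs_succ (j : ℕ) : conj (addF f (delta (m+1))) (j + 1) = conj (addF f (delta m)) j := by
  apply nat_eq_of_lt_iff
  intro v
  rw [duality (isPartition_FD hf (m+1)) v (j+1), duality (isPartition_FD hf m) v j]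
  simp only [addF, delta]
  have : m ≤ v → f v = 0 := fun h => part_zero_of_ge hf (by omega)
  omega

include hf hm in
lemma cF_le_cFs (j : ℕ) : conj (addF f (delta m)) j ≤ conj (addF f (delta (m+1))) j := by
  rcases Nat.eq_zero_or_pos j with h | h
  · subst h
    rw [cFs_zero hf hm]
    exact cF0_le hf hm
  · obtain ⟨j', rfl⟩ : ∃ j', j = j' + 1 := ⟨j - 1, by omega⟩
    rw [cFs_succ hf hm]
    exact (conj_isPartition (isPartition_FD hf m)).1 (by omega)

include hf hm in
lemma cFs_le (j : ℕ) : conj (addF f (delta (m+1))) j ≤ conj (addF f (delta m)) j + 1 := by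
  rcases Nat.eq_zero_or_pos j with h | h
  · subst h
    rw [cFs_zero hf hm]
    rcases Nat.lt_or_ge m 2 with h2 | h2
    · omega
    · have h1 := (duality (isPartition_FD hf m) (m - 2) 0).mpr ?_
      · omega
      · simp only [addF, delta]; omega
  · obtain ⟨j', rfl⟩ : ∃ j', j = j' + 1 := ⟨j - 1, by omega⟩
    rw [cFs_succ hf hm]
    set c := conj (addF f (delta m)) (j' + 1) with hc
    by_contra hcon
    push_neg at hcon
    have h1 : j' + 1 ≤ addF f (delta m) (c + 1) :=
      (duality (isPartition_FD hf m) (c+1) j').mp (by omega)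
    have h2 : addF f (delta m) c ≤ j' + 1 := by
      by_contra h3
      have := (duality (isPartition_FD hf m) c (j'+1)).mpr (by omega)
      omega
    simp only [addF, delta] at h1 h2
    have h4 : f (c+1) ≤ f c := hf.1 (by omega)
    have h5 : 1 ≤ f (c+1) → c + 1 < conj f 0 := by
      intro h6
      by_contra h7
      have := part_zero_of_ge hf (i := c+1) (by omega)
      omega
    have hp : conj f 0 ≤ m := by omega
    omega

end WithHyp
end Main

section Chunk3
open Finset
set_option linter.unusedSectionVars false

variable {f g : ℕ → ℕ} {m : ℕ}

lemma conj_unionF {a b : ℕ → ℕ} (ha : IsPartition a) (hb : IsPartition b) (j : ℕ) :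
    conj (unionF a b) j = conj a j + conj b j :=
  conj_conj (isPartition_addF (conj_isPartition ha) (conj_isPartition hb)) j

lemma isPartition_unionF {a b : ℕ → ℕ} (ha : IsPartition a) (hb : IsPartition b) :
    IsPartition (unionF a b) :=
  conj_isPartition (isPartition_addF (conj_isPartition ha) (conj_isPartition hb))

section WithHyp2
variable (hf : IsPartition f) (hg : IsPartition g) (hm : conj f 0 + g 0 ≤ m)

include hf hm in
lemma K1 {j' : ℕ} (h1 : 1 ≤ conj f j') :
    conj (addF f (delta m)) (m + j' - conj f j') = conj f j' := by
  set c := conj f j' with hc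
  have hcp : c ≤ conj f 0 := (conj_isPartition hf).1 (Nat.zero_le j')
  have hfc1 : j' + 1 ≤ f (c - 1) := (duality hf (c-1) j').mp (by omega)
  have hfc : f c ≤ j' := by
    by_contra h
    have := (duality hf c j').mpr (by omega)
    omega
  apply conj_eq_of (isPartition_FD hf m)
  · intro _
    simp only [addF, delta]
    omega
  · simp only [addF, delta]
    omega

include hf hm in
lemma bos_ge {j : ℕ} (hj : conj (addF f (delta (m+1))) j ≠ conj (addF f (delta m)) j + 1)
    (hc : 1 ≤ conj (addF f (delta m)) j) : m ≤ j + conj (addF f (delta m)) j := by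
  set c := conj (addF f (delta m)) j with hcdef
  by_contra hcon
  push_neg at hcon
  rcases Nat.lt_or_ge (j + c) (m - 1) with h2 | h2
  · have hF : j + 1 ≤ addF f (delta m) (m - 2 - j) := by
      simp only [addF, delta]; omega
    have := (duality (isPartition_FD hf m) (m - 2 - j) j).mpr hF
    omega
  · -- j + c = m - 1
    have hFc : addF f (delta m) c ≤ j := by
      by_contra h
      have := (duality (isPartition_FD hf m) c j).mpr (by omega)
      omega
    have hfc0 : f c = 0 := by
      simp only [addF, delta] at hFc
      omega
    have hFs : j + 1 ≤ addF f (delta (m+1)) c := by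
      simp only [addF, delta]
      omega
    have h3 := (duality (isPartition_FD hf (m+1)) c j).mpr hFs
    have h4 := cFs_le hf hm j
    omega

include hf hm in
lemma inv_count {j : ℕ} (hj : m ≤ j + conj (addF f (delta m)) j)
    (hferm : conj (addF f (delta (m+1))) j = conj (addF f (delta m)) j) :
    conj f (j + conj (addF f (delta m)) j - m) = conj (addF f (delta m)) j := by
  set c := conj (addF f (delta m)) j with hcdef
  have hcm : c ≤ m := le_trans ((conj_isPartition (isPartition_FD hf m)).1 (Nat.zero_le j)) (cF0_le hf hm)
  apply conj_eq_of hf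
  · intro hc
    have hFc1 : j + 1 ≤ addF f (delta m) (c - 1) :=
      (duality (isPartition_FD hf m) (c-1) j).mp (by omega)
    simp only [addF, delta] at hFc1
    omega
  · rcases Nat.eq_or_lt_of_le hcm with he | hlt
    · have : f c = 0 := part_zero_of_ge hf (by omega)
      omega
    · have hFc : addF f (delta m) c ≤ j := by
        by_contra h
        have := (duality (isPartition_FD hf m) c j).mpr (by omega)
        omega
      have hne : addF f (delta m) c ≠ j := by
        intro he
        have hFs : j + 1 ≤ addF f (delta (m+1)) c := by
          simp only [addF, delta] at he ⊢
          omega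
        have := (duality (isPartition_FD hf (m+1)) c j).mpr hFs
        omega
      simp only [addF, delta] at hFc hne
      omega

include hf hm in
lemma psi_not_ferm {j' : ℕ} (h1 : 1 ≤ conj f j') :
    conj (addF f (delta (m+1))) (m + j' - conj f j') = conj (addF f (delta m)) (m + j' - conj f j') := by
  set c := conj f j' with hc
  have hcp : c ≤ conj f 0 := (conj_isPartition hf).1 (Nat.zero_le j')
  have hfc : f c ≤ j' := by
    by_contra h
    have := (duality hf c j').mpr (by omega)
    omega
  rcases Nat.eq_zero_or_pos (m + j' - c) with h0 | h0
  · have hc' : c = m ∧ j' = 0 := by omega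
    have h2 := K1 hf hm h1
    rw [← hc] at h2
    rw [h0] at h2 ⊢
    rw [cFs_zero hf hm, h2]
    omega
  · obtain ⟨J', hJ'⟩ : ∃ J', m + j' - c = J' + 1 := ⟨m + j' - c - 1, by omega⟩
    rw [hJ', cFs_succ hf hm, ← hJ']
    have hK1 : conj (addF f (delta m)) (m + j' - c) = c := K1 hf hm h1
    have hge : conj (addF f (delta m)) (m + j' - c - 1) ≥ c := by
      have := (conj_isPartition (isPartition_FD hf m)).1 (show m + j' - c - 1 ≤ m + j' - c by omega)
      omega
    have hle : conj (addF f (delta m)) (m + j' - c - 1) ≤ c := by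
      by_contra h
      have hd := (duality (isPartition_FD hf m) c (m + j' - c - 1)).mp (by omega)
      simp only [addF, delta] at hd
      rcases Nat.eq_or_lt_of_le hcp with _ | _
      · have : f c = 0 := part_zero_of_ge hf (by omega)
        omega
      · omega
    have hJeq : m + j' - c - 1 = J' := by omega
    rw [hJeq] at hge hle
    omega

include hf hm in
lemma phi_lt {i j : ℕ} (hi : i < conj f 0) (hj : j < f i + (m - 1 - i))
    (hc : 1 ≤ conj (addF f (delta m)) j) : j + conj (addF f (delta m)) j < f i + m := by
  set c := conj (addF f (delta m)) j with hcdef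
  have hcm : c ≤ m := le_trans ((conj_isPartition (isPartition_FD hf m)).1 (Nat.zero_le j)) (cF0_le hf hm)
  have hFc1 : j + 1 ≤ addF f (delta m) (c - 1) :=
    (duality (isPartition_FD hf m) (c-1) j).mp (by omega)
  simp only [addF, delta] at hFc1
  rcases Nat.lt_or_ge (c - 1) i with hlt | hge
  · omega
  · have := hf.1 hge
    omega

include hf hm in
lemma cF_pos {j : ℕ} (hj : j + 1 ≤ f 0 + (m - 1)) : 1 ≤ conj (addF f (delta m)) j := by
  apply (duality (isPartition_FD hf m) 0 j).mpr
  simp only [addF, delta]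
  omega

end WithHyp2
end Chunk3

section Chunk4
open Finset
set_option linter.unusedSectionVars false

variable {f g : ℕ → ℕ} {m : ℕ}
variable (hf : IsPartition f) (hg : IsPartition g) (hm : conj f 0 + g 0 ≤ m)

include hf hg hm in
lemma row_big {i : ℕ} (hi : i < conj f 0) :
    unionF (addF f (delta m)) g i = f i + (m - 1 - i) ∧
    unionF (addF f (delta (m+1))) g i = f i + (m - 1 - i) + 1 := by
  have hfi : 1 ≤ f i := part_pos_of_lt hf hi
  have hpm : conj f 0 ≤ m := by omega
  set v := f i + (m - 1 - i) with hv
  have hvM : m - conj f 0 < v := by omega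
  have hFi : addF f (delta m) i = v := by simp only [addF, delta]; exact hv.symm
  have hFsi : addF f (delta (m+1)) i = v + 1 := by simp only [addF, delta]; omega
  constructor
  · apply conj_eq_of (isPartition_addF (conj_isPartition (isPartition_FD hf m)) (conj_isPartition hg))
    · intro _
      have h1 : i + 1 ≤ conj (addF f (delta m)) (v - 1) :=
        (duality (isPartition_FD hf m) i (v-1)).mpr (by omega)
      simp only [addF]
      omega
    · simp only [addF]
      have h2 : conj g v = 0 := cg_zero hg hm (by omega)
      have h3 : conj (addF f (delta m)) v ≤ i := by
        by_contra h
        have := (duality (isPartition_FD hf m) i v).mp (by omega)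
        omega
      omega
  · apply conj_eq_of (isPartition_addF (conj_isPartition (isPartition_FD hf (m+1))) (conj_isPartition hg))
    · intro _
      have h1 : i + 1 ≤ conj (addF f (delta (m+1))) v := by
        obtain ⟨v', hv'⟩ : ∃ v', v = v' + 1 := ⟨v - 1, by omega⟩
        rw [hv', cFs_succ hf hm]
        exact (duality (isPartition_FD hf m) i v').mpr (by omega)
      simp only [addF, Nat.add_sub_cancel]
      omega
    · simp only [addF]
      have h2 : conj g (v + 1) = 0 := cg_zero hg hm (by omega)
      have h3 : conj (addF f (delta (m+1))) (v + 1) ≤ i := by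
        rw [cFs_succ hf hm]
        by_contra h
        have := (duality (isPartition_FD hf m) i v).mp (by omega)
        omega
      omega

include hf hg hm in
lemma row_g {k : ℕ} (hk : k < conj g 0) :
    unionF (addF f (delta m)) g (m - g k + k) = g k ∧
    unionF (addF f (delta (m+1))) g (m - g k + k) = g k := by
  have hv1 : 1 ≤ g k := part_pos_of_lt hg hk
  have hvM : g k ≤ m - conj f 0 := by
    have := hg.1 (Nat.zero_le k)
    omega
  have hpm : conj f 0 ≤ m := by omega
  set v := g k with hv
  have hcgk : k + 1 ≤ conj g (v - 1) := (duality hg k (v-1)).mpr (by omega)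
  have hcgv : conj g v ≤ k := by
    by_contra h
    have := (duality hg k v).mp (by omega)
    omega
  have hcFv : conj (addF f (delta m)) v ≤ m - v := by
    rcases Nat.lt_or_ge (v + conj f 0) m with h | h
    · rw [cF_small hf hm h]; omega
    · have := cF_le_p hf hm (j := v) (by omega)
      omega
  constructor
  · apply conj_eq_of (isPartition_addF (conj_isPartition (isPartition_FD hf m)) (conj_isPartition hg))
    · intro _
      have h1 : conj (addF f (delta m)) (v - 1) = m - 1 - (v - 1) := cF_small hf hm (by omega)
      simp only [addF]
      omega
    · simp only [addF]
      omega
  · apply conj_eq_of (isPartition_addF (conj_isPartition (isPartition_FD hf (m+1))) (conj_isPartition hg))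
    · intro _
      simp only [addF]
      rcases Nat.eq_or_lt_of_le hv1 with h1 | h1
      · rw [show v - 1 = 0 by omega, cFs_zero hf hm]
        rw [show v - 1 = 0 by omega] at hcgk
        omega
      · obtain ⟨v', hv'⟩ : ∃ v', v - 1 = v' + 1 := ⟨v - 2, by omega⟩
        rw [hv', cFs_succ hf hm]
        rw [hv'] at hcgk
        have h2 : conj (addF f (delta m)) v' = m - 1 - v' := cF_small hf hm (by omega)
        omega
    · simp only [addF]
      obtain ⟨v', hv'⟩ : ∃ v', v = v' + 1 := ⟨v - 1, by omega⟩
      rw [hv', cFs_succ hf hm]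
      rw [hv'] at hcgv
      have h2 : conj (addF f (delta m)) v' = m - 1 - v' := cF_small hf hm (by omega)
      omega

include hf hg hm in
lemma L_le_Ls (i : ℕ) :
    unionF (addF f (delta m)) g i ≤ unionF (addF f (delta (m+1))) g i := by
  by_contra hc
  push_neg at hc
  set w := unionF (addF f (delta (m+1))) g i with hw
  have h1 : w + 1 ≤ unionF (addF f (delta m)) g i := hc
  have h2 := (duality (isPartition_addF (conj_isPartition (isPartition_FD hf m)) (conj_isPartition hg)) w i).mp h1
  have h3 : i + 1 ≤ addF (conj (addF f (delta (m+1)))) (conj g) w := by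
    simp only [addF] at h2 ⊢
    have := cF_le_cFs hf hm w
    omega
  have h4 : w + 1 ≤ unionF (addF f (delta (m+1))) g i :=
    (duality (isPartition_addF (conj_isPartition (isPartition_FD hf (m+1))) (conj_isPartition hg)) w i).mpr h3
  omega

include hf hg hm in
lemma Ls_le (i : ℕ) :
    unionF (addF f (delta (m+1))) g i ≤ unionF (addF f (delta m)) g i + 1 := by
  by_contra hc
  push_neg at hc
  set w := unionF (addF f (delta m)) g i with hw
  have h1 : (w + 1) + 1 ≤ unionF (addF f (delta (m+1))) g i := hc
  have h2 := (duality (isPartition_addF (conj_isPartition (isPartition_FD hf (m+1))) (conj_isPartition hg)) (w+1) i).mp h1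
  simp only [addF] at h2
  rw [cFs_succ hf hm] at h2
  have h3 : i + 1 ≤ addF (conj (addF f (delta m))) (conj g) w := by
    simp only [addF, Nat.add_sub_cancel] at h2 ⊢
    have := (conj_isPartition hg).1 (show w ≤ w + 1 by omega)
    omega
  have h4 : w + 1 ≤ unionF (addF f (delta m)) g i :=
    (duality (isPartition_addF (conj_isPartition (isPartition_FD hf m)) (conj_isPartition hg)) w i).mpr h3
  omega

include hf hg hm in
lemma L_tail_le {i : ℕ} (hi : conj f 0 ≤ i) :
    unionF (addF f (delta m)) g i ≤ m - conj f 0 := by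
  have hpm : conj f 0 ≤ m := by omega
  have h1 : unionF (addF f (delta m)) g i ≤ unionF (addF f (delta m)) g (conj f 0) :=
    (isPartition_unionF (isPartition_FD hf m) hg).1 hi
  have h2 : unionF (addF f (delta m)) g (conj f 0) ≤ m - conj f 0 := by
    by_contra h
    have hin : (m - conj f 0) + 1 ≤ unionF (addF f (delta m)) g (conj f 0) := by omega
    have h3 := (duality (isPartition_addF (conj_isPartition (isPartition_FD hf m)) (conj_isPartition hg)) (m - conj f 0) (conj f 0)).mp hin
    simp only [addF] at h3
    rw [cF_at_M hf hm, cg_zero hg hm (le_refl _)] at h3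
    omega
  omega

include hf hg hm in
lemma row_class {i : ℕ} (hi : conj f 0 ≤ i) (hv : 1 ≤ unionF (addF f (delta m)) g i)
    (hne : unionF (addF f (delta (m+1))) g i ≠ unionF (addF f (delta m)) g i + 1) :
    ∃ k, k < conj g 0 ∧ i = m - g k + k := by
  have hpm : conj f 0 ≤ m := by omega
  set v := unionF (addF f (delta m)) g i with hvdef
  have hLs : unionF (addF f (delta (m+1))) g i = v := by
    have := L_le_Ls hf hg hm i
    have := Ls_le hf hg hm i
    omega
  have hvM : v ≤ m - conj f 0 := L_tail_le hf hg hm hi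
  -- i < cF(v-1) + cg(v-1)
  have h0 : (v - 1) + 1 ≤ unionF (addF f (delta m)) g i := by omega
  have h1 := (duality (isPartition_addF (conj_isPartition (isPartition_FD hf m)) (conj_isPartition hg)) (v-1) i).mp h0
  simp only [addF] at h1
  rw [cF_small hf hm (by omega)] at h1
  -- i ≥ cFs v + cg v
  have h2 : addF (conj (addF f (delta (m+1)))) (conj g) v ≤ i := by
    by_contra h
    have h5 : v + 1 ≤ unionF (addF f (delta (m+1))) g i :=
      (duality (isPartition_addF (conj_isPartition (isPartition_FD hf (m+1))) (conj_isPartition hg)) v i).mpr (by omega)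
    omega
  simp only [addF] at h2
  obtain ⟨v', hv'⟩ : ∃ v', v = v' + 1 := ⟨v - 1, by omega⟩
  rw [hv', cFs_succ hf hm] at h2
  rw [show v - 1 = v' by omega] at h1
  rw [cF_small hf hm (by omega)] at h2
  set k := i - (m - v) with hk
  have hgk1 : v ≤ g k := by
    have := (duality hg k v').mp (by omega)
    omega
  have hgk2 : g k ≤ v := by
    by_contra h
    have := (duality hg k (v'+1)).mpr (by omega)
    omega
  refine ⟨k, ?_, ?_⟩
  · have h3 : k + 1 ≤ conj g v' := by omega
    have := (conj_isPartition hg).1 (Nat.zero_le v')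
    omega
  · omega

include hf hg hm in
lemma col_ferm {j : ℕ} (hj : j + conj f 0 < m) :
    conj (addF f (delta (m+1))) j = conj (addF f (delta m)) j + 1 := by
  rcases Nat.eq_zero_or_pos j with h | h
  · subst h
    rw [cFs_zero hf hm, cF_small hf hm hj]
    omega
  · obtain ⟨j', rfl⟩ : ∃ j', j = j' + 1 := ⟨j - 1, by omega⟩
    rw [cFs_succ hf hm, cF_small hf hm (by omega), cF_small hf hm hj]
    omega

end Chunk4

section Chunk5
open Finset
set_option linter.unusedSectionVars false
set_option maxHeartbeats 1000000

variable {f g : ℕ → ℕ} {m : ℕ}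
variable (hf : IsPartition f) (hg : IsPartition g) (hm : conj f 0 + g 0 ≤ m)

include hf hg hm in
lemma row_prod_one {i : ℕ} (u v : K) (hi : conj f 0 ≤ i)
    (hiC : ∀ k, k < conj g 0 → i ≠ m - g k + k) :
    (∏ j ∈ Finset.range (unionF (addF f (delta m)) g i),
      if Bosonic (unionF (addF f (delta m)) g) (unionF (addF f (delta (m+1))) g) i j then
        (1 - u ^ (unionF (addF f (delta (m+1))) g i - (j + 1)) *
          v ^ (conj (unionF (addF f (delta m)) g) j - i)) else 1) = 1 := by
  rcases Nat.eq_zero_or_pos (unionF (addF f (delta m)) g i) with h0 | h0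
  · rw [h0]
    simp
  · have hferm : unionF (addF f (delta (m+1))) g i = unionF (addF f (delta m)) g i + 1 := by
      by_contra hne
      obtain ⟨k, hk, hik⟩ := row_class hf hg hm hi h0 hne
      exact hiC k hk hik
    apply Finset.prod_eq_one
    intro j hj
    have hjlt : j < unionF (addF f (delta m)) g i := Finset.mem_range.mp hj
    have hti := L_tail_le hf hg hm hi
    have hjM : j + conj f 0 < m := by omega
    rw [if_neg]
    simp only [Bosonic, not_not]
    refine ⟨hferm, ?_⟩
    rw [conj_unionF (isPartition_FD hf (m+1)) hg, conj_unionF (isPartition_FD hf m) hg,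
      col_ferm hf hg hm hjM]
    omega

include hf hg hm in
lemma row_prod_g {k : ℕ} (u v : K) (hk : k < conj g 0) :
    (∏ j ∈ Finset.range (unionF (addF f (delta m)) g (m - g k + k)),
      if Bosonic (unionF (addF f (delta m)) g) (unionF (addF f (delta (m+1))) g) (m - g k + k) j then
        (1 - u ^ (unionF (addF f (delta (m+1))) g (m - g k + k) - (j + 1)) *
          v ^ (conj (unionF (addF f (delta m)) g) j - (m - g k + k))) else 1) =
    ∏ j ∈ Finset.range (g k),
      (1 - u ^ (g k - (j + 1)) * v ^ ((g k - (j + 1)) + (conj g j - k))) := by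
  obtain ⟨hL, hLs⟩ := row_g hf hg hm hk
  rw [hL, hLs]
  apply Finset.prod_congr rfl
  intro j hj
  have hjlt : j < g k := Finset.mem_range.mp hj
  have hgk0 : g k ≤ m - conj f 0 := by
    have := hg.1 (Nat.zero_le k)
    omega
  rw [if_pos]
  · rw [conj_unionF (isPartition_FD hf m) hg, cF_small hf hm (by omega)]
    have hcgj : k + 1 ≤ conj g j := (duality hg k j).mpr (by omega)
    have he : m - 1 - j + conj g j - (m - g k + k) = (g k - (j + 1)) + (conj g j - k) := by
      omega
    rw [he]
  · simp only [Bosonic, hL, hLs]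
    intro ⟨h1, _⟩
    omega

end Chunk5

section Chunk6
open Finset
set_option linter.unusedSectionVars false
set_option maxHeartbeats 1000000

variable {f g : ℕ → ℕ} {m : ℕ}
variable (hf : IsPartition f) (hg : IsPartition g) (hm : conj f 0 + g 0 ≤ m)

include hf hg hm in
lemma row_prod_big {i : ℕ} (u v : K) (hi : i < conj f 0) :
    (∏ j ∈ Finset.range (unionF (addF f (delta m)) g i),
      if Bosonic (unionF (addF f (delta m)) g) (unionF (addF f (delta (m+1))) g) i j then
        (1 - u ^ (unionF (addF f (delta (m+1))) g i - (j + 1)) *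
          v ^ (conj (unionF (addF f (delta m)) g) j - i)) else 1) =
    ∏ j ∈ Finset.range (f i),
      (1 - u ^ ((f i - (j + 1)) + (conj f j - i)) * v ^ (conj f j - i)) := by
  have hpm : conj f 0 ≤ m := by omega
  have hf0 : f i ≤ f 0 := hf.1 (Nat.zero_le i)
  obtain ⟨hL, hLs⟩ := row_big hf hg hm hi
  have hLpart := isPartition_unionF (isPartition_FD hf m) hg
  rw [hL, hLs]
  have hbos : ∀ j, (Bosonic (unionF (addF f (delta m)) g) (unionF (addF f (delta (m+1))) g) i j) ↔
      ¬ (conj (addF f (delta (m+1))) j = conj (addF f (delta m)) j + 1) := by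
    intro j
    unfold Bosonic
    rw [conj_unionF (isPartition_FD hf (m+1)) hg, conj_unionF (isPartition_FD hf m) hg]
    constructor
    · intro hb hc
      exact hb ⟨by rw [hL, hLs], by omega⟩
    · rintro hnc ⟨_, h2⟩
      exact hnc (by omega)
  calc (∏ j ∈ Finset.range (f i + (m - 1 - i)),
      if Bosonic (unionF (addF f (delta m)) g) (unionF (addF f (delta (m+1))) g) i j then
        (1 - u ^ (f i + (m - 1 - i) + 1 - (j + 1)) *
          v ^ (conj (unionF (addF f (delta m)) g) j - i)) else 1)
      = ∏ j ∈ (Finset.range (f i + (m - 1 - i))).filter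
          (fun j => ¬ (conj (addF f (delta (m+1))) j = conj (addF f (delta m)) j + 1)),
          (1 - u ^ (f i + (m - 1 - i) + 1 - (j + 1)) *
            v ^ (conj (unionF (addF f (delta m)) g) j - i)) := by
        rw [Finset.prod_filter]
        apply Finset.prod_congr rfl
        intro j _
        exact if_congr (hbos j) rfl rfl
    _ = ∏ j ∈ Finset.range (f i),
          (1 - u ^ ((f i - (j + 1)) + (conj f j - i)) * v ^ (conj f j - i)) := ?_
  -- the bijection
  have hfacts : ∀ j ∈ (Finset.range (f i + (m - 1 - i))).filter
      (fun j => ¬ (conj (addF f (delta (m+1))) j = conj (addF f (delta m)) j + 1)),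
      m ≤ j + conj (addF f (delta m)) j ∧
      conj f (j + conj (addF f (delta m)) j - m) = conj (addF f (delta m)) j ∧
      j + conj (addF f (delta m)) j < f i + m ∧
      conj g j = 0 ∧ i + 1 ≤ conj (addF f (delta m)) j ∧ conj (addF f (delta m)) j ≤ m := by
    intro j hj
    obtain ⟨hjr, hcond⟩ := Finset.mem_filter.mp hj
    have hjlt : j < f i + (m - 1 - i) := Finset.mem_range.mp hjr
    have hjm : m ≤ j + conj f 0 := by
      by_contra hc
      exact hcond (col_ferm hf hg hm (by omega))
    have hc1 : 1 ≤ conj (addF f (delta m)) j := cF_pos hf hm (by omega)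
    have hbge : m ≤ j + conj (addF f (delta m)) j := bos_ge hf hm hcond hc1
    have hcm : conj (addF f (delta m)) j ≤ m :=
      le_trans ((conj_isPartition (isPartition_FD hf m)).1 (Nat.zero_le j)) (cF0_le hf hm)
    have hferm0 : conj (addF f (delta (m+1))) j = conj (addF f (delta m)) j := by
      have := cFs_le hf hm j
      have := cF_le_cFs hf hm j
      omega
    have hcgj : conj g j = 0 := cg_zero hg hm (by omega)
    have hci : i + 1 ≤ conj (addF f (delta m)) j := by
      have h1 : j + 1 ≤ unionF (addF f (delta m)) g i := by rw [hL]; omega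
      have h2 := (duality hLpart i j).mpr h1
      rw [conj_unionF (isPartition_FD hf m) hg] at h2
      omega
    exact ⟨hbge, inv_count hf hm hbge hferm0, phi_lt hf hm hi (by omega) hc1, hcgj, hci, hcm⟩
  apply Finset.prod_nbij' (fun j => j + conj (addF f (delta m)) j - m)
    (fun j' => m + j' - conj f j')
  · -- maps into range (f i)
    intro j hj
    obtain ⟨hbge, _, hphi, _, _, _⟩ := hfacts j hj
    exact Finset.mem_range.mpr (by omega)
  · -- psi maps into filter
    intro j' hj'
    have hfij : j' + 1 ≤ f i := Finset.mem_range.mp hj'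
    have hc' : i + 1 ≤ conj f j' := (duality hf i j').mpr hfij
    have hc'p : conj f j' ≤ conj f 0 := (conj_isPartition hf).1 (Nat.zero_le j')
    rw [Finset.mem_filter]
    constructor
    · exact Finset.mem_range.mpr (by omega)
    · rw [psi_not_ferm hf hm (by omega)]
      omega
  · -- left inverse
    intro j hj
    obtain ⟨hbge, hinv, _, _, _, hcm⟩ := hfacts j hj
    rw [hinv]
    omega
  · -- right inverse
    intro j' hj'
    have hfij : j' + 1 ≤ f i := Finset.mem_range.mp hj'
    have hc' : i + 1 ≤ conj f j' := (duality hf i j').mpr hfij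
    have hc'p : conj f j' ≤ conj f 0 := (conj_isPartition hf).1 (Nat.zero_le j')
    rw [K1 hf hm (by omega)]
    omega
  · -- factor equality
    intro j hj
    obtain ⟨hbge, hinv, hphi, hcgj, hci, hcm⟩ := hfacts j hj
    have hjlt : j < f i + (m - 1 - i) := Finset.mem_range.mp (Finset.mem_filter.mp hj).1
    rw [conj_unionF (isPartition_FD hf m) hg, hinv, hcgj]
    rw [show f i + (m - 1 - i) + 1 - (j + 1)
        = (f i - (j + conj (addF f (delta m)) j - m + 1)) + (conj (addF f (delta m)) j - i) by omega]
    rw [show conj (addF f (delta m)) j + 0 - i = conj (addF f (delta m)) j - i by omega]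

end Chunk6

section Chunk7
open Finset
set_option linter.unusedSectionVars false
set_option maxHeartbeats 1000000

variable {f g : ℕ → ℕ} {m : ℕ}
variable (hf : IsPartition f) (hg : IsPartition g) (hm : conj f 0 + g 0 ≤ m)

include hf hg hm in
lemma main_prod (u v : K) :
    hdownGen u v (unionF (addF f (delta m)) g) (unionF (addF f (delta (m+1))) g) =
      (∏ i ∈ Finset.range (conj f 0), ∏ j ∈ Finset.range (f i),
        (1 - u ^ ((f i - (j + 1)) + (conj f j - i)) * v ^ (conj f j - i))) *
      (∏ k ∈ Finset.range (conj g 0), ∏ j ∈ Finset.range (g k),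
        (1 - u ^ (g k - (j + 1)) * v ^ ((g k - (j + 1)) + (conj g j - k)))) := by
  have hpm : conj f 0 ≤ m := by omega
  have hLpart := isPartition_unionF (isPartition_FD hf m) hg
  set Row : ℕ → K := fun i => ∏ j ∈ Finset.range (unionF (addF f (delta m)) g i),
      if Bosonic (unionF (addF f (delta m)) g) (unionF (addF f (delta (m+1))) g) i j then
        (1 - u ^ (unionF (addF f (delta (m+1))) g i - (j + 1)) *
          v ^ (conj (unionF (addF f (delta m)) g) j - i)) else 1 with hRow
  have hdg : hdownGen u v (unionF (addF f (delta m)) g) (unionF (addF f (delta (m+1))) g) =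
      ∏ i ∈ Finset.range (plen (unionF (addF f (delta m)) g)), Row i := rfl
  rw [hdg]
  have hplen : plen (unionF (addF f (delta m)) g) ≤ m + conj g 0 := by
    rw [plen_eq_conj_zero, conj_unionF (isPartition_FD hf m) hg]
    have := cF0_le hf hm
    omega
  have hrow1 : ∀ i, plen (unionF (addF f (delta m)) g) ≤ i → Row i = 1 := by
    intro i hi
    have h0 : unionF (addF f (delta m)) g i = 0 := by
      apply part_zero_of_ge hLpart
      rw [plen_eq_conj_zero] at hi
      exact hi
    rw [hRow]
    simp only [h0, Finset.range_zero, Finset.prod_empty]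
  have hext : ∏ i ∈ Finset.range (plen (unionF (addF f (delta m)) g)), Row i =
      ∏ i ∈ Finset.range (m + conj g 0), Row i := by
    apply Finset.prod_subset (Finset.range_subset_range.mpr hplen)
    intro x _ hx
    exact hrow1 x (by simpa using hx)
  rw [hext]
  have hgle : ∀ k, g k ≤ g 0 := fun k => hg.1 (Nat.zero_le k)
  set C := (Finset.range (conj g 0)).image (fun k => m - g k + k) with hC
  have hCmem : ∀ x ∈ C, conj f 0 ≤ x ∧ x < m + conj g 0 := by
    intro x hx
    obtain ⟨k, hk, rfl⟩ := Finset.mem_image.mp hx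
    have := hgle k
    have hk' := Finset.mem_range.mp hk
    constructor <;> omega
  have hsub : Finset.range (conj f 0) ∪ C ⊆ Finset.range (m + conj g 0) := by
    intro x hx
    rcases Finset.mem_union.mp hx with h | h
    · have := Finset.mem_range.mp h
      refine Finset.mem_range.mpr (by omega)
    · exact Finset.mem_range.mpr (hCmem x h).2
  have hdisj : Disjoint (Finset.range (conj f 0)) C := by
    rw [Finset.disjoint_left]
    intro a haA haC
    have := (hCmem a haC).1
    have := Finset.mem_range.mp haA
    omega
  rw [← Finset.prod_sdiff hsub]
  have hones : ∏ x ∈ Finset.range (m + conj g 0) \ (Finset.range (conj f 0) ∪ C), Row x = 1 := by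
    apply Finset.prod_eq_one
    intro i hi
    obtain ⟨_, hnotin⟩ := Finset.mem_sdiff.mp hi
    have hiA : conj f 0 ≤ i := by
      by_contra h
      exact hnotin (Finset.mem_union_left _ (Finset.mem_range.mpr (by omega)))
    have hiC : ∀ k, k < conj g 0 → i ≠ m - g k + k := by
      intro k hk hik
      exact hnotin (Finset.mem_union_right _
        (Finset.mem_image.mpr ⟨k, Finset.mem_range.mpr hk, hik.symm⟩))
    rw [hRow]
    exact row_prod_one hf hg hm u v hiA hiC
  rw [hones, one_mul, Finset.prod_union hdisj]
  congr 1
  · apply Finset.prod_congr rfl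
    intro i hi
    rw [hRow]
    exact row_prod_big hf hg hm u v (Finset.mem_range.mp hi)
  · rw [hC, Finset.prod_image]
    · apply Finset.prod_congr rfl
      intro k hk
      rw [hRow]
      exact row_prod_g hf hg hm u v (Finset.mem_range.mp hk)
    · intro x hx y hy hxy
      simp only at hxy
      have h1 := hgle x
      have h2 := hgle y
      rcases le_total x y with h | h
      · have := hg.1 h
        omega
      · have := hg.1 h
        omega

end Chunk7

section Chunk8
open Finset
set_option linter.unusedSectionVars false
set_option maxHeartbeats 1000000

lemma range_filter_lt {n B : ℕ} (h : n ≤ B) :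
    (Finset.range B).filter (fun j => j < n) = Finset.range n := by
  ext x
  simp only [Finset.mem_filter, Finset.mem_range]
  omega

lemma cell_prod_swap {h : ℕ → ℕ} (hh : IsPartition h) (T : ℕ → ℕ → K) :
    ∏ i ∈ Finset.range (conj h 0), ∏ j ∈ Finset.range (h i), T i j
      = ∏ j ∈ Finset.range (h 0), ∏ i ∈ Finset.range (conj h j), T i j := by
  have step1 : ∀ i ∈ Finset.range (conj h 0),
      ∏ j ∈ Finset.range (h i), T i j = ∏ j ∈ Finset.range (h 0), if j < h i then T i j else 1 := by
    intro i _
    rw [← Finset.prod_filter, range_filter_lt (hh.1 (Nat.zero_le i))]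
  rw [Finset.prod_congr rfl step1, Finset.prod_comm]
  apply Finset.prod_congr rfl
  intro j _
  have step2 : ∀ i ∈ Finset.range (conj h 0),
      (if j < h i then T i j else 1) = (if i < conj h j then T i j else 1) := by
    intro i _
    exact if_congr (by rw [Nat.lt_iff_add_one_le, Nat.lt_iff_add_one_le, duality hh]) rfl rfl
  rw [Finset.prod_congr rfl step2, ← Finset.prod_filter,
    range_filter_lt ((conj_isPartition hh).1 (Nat.zero_le j))]

lemma bProd_f_eq (f : ℕ → ℕ) :
    bProd q (q * t) f =
      (∏ i ∈ Finset.range (conj f 0), ∏ j ∈ Finset.range (f i),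
        (1 - q ^ ((f i - (j + 1)) + (conj f j - i)) * t ^ (conj f j - i))) /
      (∏ i ∈ Finset.range (conj f 0), ∏ j ∈ Finset.range (f i),
        (1 - q ^ ((f i - j) + (conj f j - (i + 1))) * t ^ (conj f j - (i + 1)))) := by
  rw [bProd, plen_eq_conj_zero, ← Finset.prod_div_distrib]
  apply Finset.prod_congr rfl
  intro i _
  rw [← Finset.prod_div_distrib]
  apply Finset.prod_congr rfl
  intro j _
  have hexp : ∀ x y : ℕ, (q : K) ^ x * (q * t) ^ y = q ^ (x + y) * t ^ y := by
    intro x y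
    rw [mul_pow, pow_add]
    ring
  rw [hexp, hexp]

lemma bProd_g_eq (g : ℕ → ℕ) :
    bProd (q * t) t g =
      (∏ k ∈ Finset.range (conj g 0), ∏ j ∈ Finset.range (g k),
        (1 - q ^ (g k - (j + 1)) * t ^ ((g k - (j + 1)) + (conj g j - k)))) /
      (∏ k ∈ Finset.range (conj g 0), ∏ j ∈ Finset.range (g k),
        (1 - q ^ (g k - j) * t ^ ((g k - j) + (conj g j - (k + 1))))) := by
  rw [bProd, plen_eq_conj_zero, ← Finset.prod_div_distrib]
  apply Finset.prod_congr rfl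
  intro k _
  rw [← Finset.prod_div_distrib]
  apply Finset.prod_congr rfl
  intro j _
  have hexp : ∀ x y : ℕ, ((q : K) * t) ^ x * t ^ y = q ^ x * t ^ (x + y) := by
    intro x y
    rw [mul_pow, pow_add]
    ring
  rw [hexp, hexp]

end Chunk8

section Chunk9
open Finset
set_option linter.unusedSectionVars false
set_option maxHeartbeats 1000000

lemma trans_g {g : ℕ → ℕ} (hg : IsPartition g) :
    (∏ i ∈ Finset.range (conj (conj g) 0), ∏ j ∈ Finset.range (conj g i),
      (1 - t ^ ((conj g i - (j + 1)) + (conj (conj g) j - i)) * q ^ (conj (conj g) j - i)))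
    = ∏ k ∈ Finset.range (conj g 0), ∏ j ∈ Finset.range (g k),
      (1 - q ^ (g k - j) * t ^ ((g k - j) + (conj g j - (k + 1)))) := by
  refine (cell_prod_swap (conj_isPartition hg) _).trans ?_
  apply Finset.prod_congr rfl
  intro k _
  simp only [conj_conj hg]
  apply Finset.prod_congr rfl
  intro j _
  rw [show (conj g j - (k + 1)) + (g k - j) = (g k - j) + (conj g j - (k + 1)) from Nat.add_comm _ _]
  ring

lemma trans_f {f : ℕ → ℕ} (hf : IsPartition f) :
    (∏ k ∈ Finset.range (conj (conj f) 0), ∏ j ∈ Finset.range (conj f k),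
      (1 - t ^ (conj f k - (j + 1)) * q ^ ((conj f k - (j + 1)) + (conj (conj f) j - k))))
    = ∏ i ∈ Finset.range (conj f 0), ∏ j ∈ Finset.range (f i),
      (1 - q ^ ((f i - j) + (conj f j - (i + 1))) * t ^ (conj f j - (i + 1))) := by
  refine (cell_prod_swap (conj_isPartition hf) _).trans ?_
  apply Finset.prod_congr rfl
  intro i _
  simp only [conj_conj hf]
  apply Finset.prod_congr rfl
  intro k _
  rw [show (conj f k - (i + 1)) + (f i - k) = (f i - k) + (conj f k - (i + 1)) from Nat.add_comm _ _]
  ring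

end Chunk9

theorem norm_correspondence' (f g : ℕ → ℕ) (hf : IsPartition f) (hg : IsPartition g)
    (m : ℕ) (hm : psize f + psize g ≤ m) :
    q ^ psize f *
        hdownGen t q (unionF (addF (conj g) (delta m)) (conj f))
          (unionF (addF (conj g) (delta (m+1))) (conj f)) /
        hdownGen q t (unionF (addF f (delta m)) g) (unionF (addF f (delta (m+1))) g) =
      q ^ psize f * (bProd q (q * t) f)⁻¹ * (bProd (q * t) t g)⁻¹ := by
  have hb1 := conj_zero_le_psize hf
  have hb2 := head_le_psize hg
  have hb3 := conj_zero_le_psize hg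
  have hb4 := head_le_psize hf
  have hm1 : conj f 0 + g 0 ≤ m := by omega
  have hm2 : conj (conj g) 0 + conj f 0 ≤ m := by
    rw [conj_conj hg 0]
    omega
  have hdn := main_prod hf hg hm1 q t
  have hup := main_prod (conj_isPartition hg) (conj_isPartition hf) hm2 t q
  rw [trans_g hg, trans_f hf] at hup
  rw [hdn, hup, bProd_f_eq f, bProd_g_eq g, inv_div, inv_div]
  ring
/-- **Norm correspondence in the stable sector** (Lemma C.1).
Let `λ`, `μ` be partitions and `m ≥ |λ| + |μ|`.  With `Λ* = (λ + δ^m) ∪ μ`,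
`Λ⊛ = (λ + δ^{m+1}) ∪ μ`, and the conjugate superpartition given by
`(Λ')* = (μ' + δ^m) ∪ λ'`, `(Λ')⊛ = (μ' + δ^{m+1}) ∪ λ'`, one has in `ℚ(q,t)`:
`q^{|λ|} · h↑_Λ(q,t) / h↓_Λ(q,t) = q^{|λ|} · b_λ(q,qt)⁻¹ · b_μ(qt,t)⁻¹`. -/
theorem norm_correspondence (f g : ℕ → ℕ) (hf : IsPartition f) (hg : IsPartition g)
    (m : ℕ) (hm : psize f + psize g ≤ m) :
    q ^ psize f *
        hdownGen t q (unionF (addF (conj g) (delta m)) (conj f))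
          (unionF (addF (conj g) (delta (m+1))) (conj f)) /
        hdownGen q t (unionF (addF f (delta m)) g) (unionF (addF f (delta (m+1))) g) =
      q ^ psize f * (bProd q (q * t) f)⁻¹ * (bProd (q * t) t g)⁻¹ := by
  exact norm_correspondence' f g hf hg m hm

end DoubleMacdonald
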